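/- Translation equivariance of the geometric log-sum-exp and softmax: assume the kernel matrix K = (exp(−c_{ij}/2))_{i,j} is positive definite. For every f ∈ ℝ^d and every constant c ∈ ℝ, Ω_C^*(f + c·1) = Ω_C^*(f) + c and g-softmax(f + c·1) = g-softmax(f), where 1 ∈ ℝ^d is the all-ones vector. -/

import Mathlib

open Finset Real Filter

noncomputable section

/-- The probability simplex in `ℝ^d`. -/
def simplexS (d : ℕ) : Set (Fin d → ℝ) := stdSimplex ℝ (Fin d)


open scoped Classical

/-- `Φ_C(α,f) = Σ_{i,j} α_i α_j exp(-(f_i + f_j + c_{ij})/2)`. -/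
def Phi {d : ℕ} (C : Matrix (Fin d) (Fin d) ℝ) (α f : Fin d → ℝ) : ℝ :=
  ∑ i, ∑ j, α i * α j * Real.exp (-(f i + f j + C i j) / 2)

/-- The geometric log-sum-exp `Ω_C^*(f) = -log min_{α ∈ △^d} Φ_C(α, f)`. -/
def OmegaStar {d : ℕ} (C : Matrix (Fin d) (Fin d) ℝ) (f : Fin d → ℝ) : ℝ :=
  -Real.log (sInf ((fun α => Phi C α f) '' simplexS d))

/-- The geometric softmax: the (unique, when the kernel is positive definite) minimizer of
`Φ_C(·, f)` over the simplex. -/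
def gsoftmax {d : ℕ} (C : Matrix (Fin d) (Fin d) ℝ) (f : Fin d → ℝ) : Fin d → ℝ :=
  if h : ∃ α ∈ simplexS d, IsMinOn (fun β => Phi C β f) (simplexS d) α
  then h.choose else fun _ => 0

/-- The soft C-transform `T(f,α)_i = -2 log Σ_j α_j exp((f_j - c_{ij})/2)`. -/
def Tsoft {d : ℕ} (C : Matrix (Fin d) (Fin d) ℝ) (f α : Fin d → ℝ) : Fin d → ℝ :=
  fun i => -2 * Real.log (∑ j, α j * Real.exp ((f j - C i j) / 2))

/-- `f` is the symmetric Sinkhorn potential of `α`: `-f = T(-f, α)`. -/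
def IsSinkhornPotential {d : ℕ} (C : Matrix (Fin d) (Fin d) ℝ) (α f : Fin d → ℝ) : Prop :=
  -f = Tsoft C (-f) α

/-- The symmetric Sinkhorn potential `∇Ω(α)`: the (unique, when the kernel is positive
definite) `f` with `-f = T(-f, α)`. -/
def gradOmega {d : ℕ} (C : Matrix (Fin d) (Fin d) ℝ) (α : Fin d → ℝ) : Fin d → ℝ :=
  if h : ∃ f : Fin d → ℝ, IsSinkhornPotential C α f then h.choose else fun _ => 0

/-- The extrapolation `f^E = -T(-(f - Ω_C^*(f)·1), g-softmax(f)) + Ω_C^*(f)·1`. -/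
def extrap {d : ℕ} (C : Matrix (Fin d) (Fin d) ℝ) (f : Fin d → ℝ) : Fin d → ℝ :=
  fun i => -(Tsoft C (fun j => -(f j - OmegaStar C f)) (gsoftmax C f) i) + OmegaStar C f

/-- The kernel matrix `K = (exp(-c_{ij}/2))_{ij}`. -/
def kernelK {d : ℕ} (C : Matrix (Fin d) (Fin d) ℝ) : Matrix (Fin d) (Fin d) ℝ :=
  Matrix.of fun i j => Real.exp (-(C i j) / 2)


section Aux

variable {d : ℕ}

lemma Phi_translate (C : Matrix (Fin d) (Fin d) ℝ) (f : Fin d → ℝ) (c : ℝ)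
    (α : Fin d → ℝ) :
    Phi C α (fun i => f i + c) = Real.exp (-c) * Phi C α f := by
  simp only [Phi, Finset.mul_sum]
  refine Finset.sum_congr rfl fun i _ => Finset.sum_congr rfl fun j _ => ?_
  have h : -(f i + c + (f j + c) + C i j) / 2 = -c + -(f i + f j + C i j) / 2 := by ring
  rw [h, Real.exp_add]; ring

lemma Phi_pos (C : Matrix (Fin d) (Fin d) ℝ) (hK : (kernelK C).PosDef)
    (f : Fin d → ℝ) {x : Fin d → ℝ} (hx : x ≠ 0) : 0 < Phi C x f := by
  set y : Fin d → ℝ := fun i => x i * Real.exp (-(f i) / 2) with hy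
  have hyne : y ≠ 0 := by
    intro h
    apply hx
    funext i
    have := congrFun h i
    simp only [hy, Pi.zero_apply] at this ⊢
    exact (mul_eq_zero.mp this).resolve_right (Real.exp_ne_zero _)
  have hpd := hK.dotProduct_mulVec_pos hyne
  have hform : dotProduct y ((kernelK C).mulVec y) = Phi C x f := by
    simp only [dotProduct, Matrix.mulVec, dotProduct, Phi, kernelK,
      Matrix.of_apply, Finset.mul_sum]
    refine Finset.sum_congr rfl fun i _ => Finset.sum_congr rfl fun j _ => ?_
    simp only [hy]
    rw [show -(f i + f j + C i j) / 2 = -f i / 2 + (-C i j / 2 + -f j / 2) from by ring,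
      Real.exp_add, Real.exp_add]
    ring
  rw [← hform]
  simpa using hpd

lemma mem_simplex_ne_zero (hd : 1 ≤ d) {α : Fin d → ℝ} (hα : α ∈ simplexS d) :
    α ≠ 0 := by
  intro h
  have hsum := hα.2
  rw [h] at hsum
  simp at hsum

lemma Phi_parallelogram (C : Matrix (Fin d) (Fin d) ℝ) (f α β : Fin d → ℝ) :
    Phi C (fun i => (α i + β i) / 2) f + Phi C (fun i => (α i - β i) / 2) f
      = (Phi C α f + Phi C β f) / 2 := by
  simp only [Phi, ← Finset.sum_add_distrib, Finset.sum_div]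
  refine Finset.sum_congr rfl fun i _ => Finset.sum_congr rfl fun j _ => by ring

lemma Phi_continuous (C : Matrix (Fin d) (Fin d) ℝ) (f : Fin d → ℝ) :
    Continuous fun α : Fin d → ℝ => Phi C α f := by
  apply continuous_finset_sum
  intro i _
  apply continuous_finset_sum
  intro j _
  exact ((continuous_apply i).mul (continuous_apply j)).mul continuous_const

lemma exists_minOn (C : Matrix (Fin d) (Fin d) ℝ) (hd : 1 ≤ d) (f : Fin d → ℝ) :
    ∃ α ∈ simplexS d, IsMinOn (fun β => Phi C β f) (simplexS d) α := by
  haveI : Nonempty (Fin d) := ⟨⟨0, hd⟩⟩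
  exact (isCompact_stdSimplex ℝ (Fin d)).exists_isMinOn
    ⟨_, single_mem_stdSimplex ℝ (⟨0, hd⟩ : Fin d)⟩ (Phi_continuous C f).continuousOn

lemma minOn_unique (C : Matrix (Fin d) (Fin d) ℝ) (hK : (kernelK C).PosDef)
    (f : Fin d → ℝ) {α β : Fin d → ℝ}
    (hα : α ∈ simplexS d) (hβ : β ∈ simplexS d)
    (hαm : IsMinOn (fun γ => Phi C γ f) (simplexS d) α)
    (hβm : IsMinOn (fun γ => Phi C γ f) (simplexS d) β) : α = β := by
  by_contra hne
  have heq : Phi C α f = Phi C β f := le_antisymm (hαm hβ) (hβm hα)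
  have hmid : (fun i => (α i + β i) / 2) ∈ simplexS d := by
    have := (convex_stdSimplex ℝ (Fin d)) hα hβ (by norm_num : (0:ℝ) ≤ 1/2)
      (by norm_num : (0:ℝ) ≤ 1/2) (by norm_num)
    convert this using 1
    · rfl
    funext i
    simp only [Pi.add_apply, Pi.smul_apply, smul_eq_mul]
    ring
  have hdne : (fun i => (α i - β i) / 2) ≠ 0 := by
    intro h
    apply hne
    funext i
    have := congrFun h i
    simp only [Pi.zero_apply] at this
    linarith [this]
  have hdpos : 0 < Phi C (fun i => (α i - β i) / 2) f := Phi_pos C hK f hdne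
  have hpar := Phi_parallelogram C f α β
  have hlt : Phi C (fun i => (α i + β i) / 2) f < Phi C α f := by
    rw [heq] at hpar ⊢
    linarith
  exact absurd (hαm hmid) (not_le.mpr hlt)

lemma sInf_image_eq (C : Matrix (Fin d) (Fin d) ℝ) (f : Fin d → ℝ)
    {α : Fin d → ℝ} (hα : α ∈ simplexS d)
    (hαm : IsMinOn (fun β => Phi C β f) (simplexS d) α) :
    sInf ((fun β => Phi C β f) '' simplexS d) = Phi C α f := by
  apply le_antisymm
  · exact csInf_le ⟨Phi C α f, by rintro _ ⟨x, hx, rfl⟩; exact hαm hx⟩ ⟨α, hα, rfl⟩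
  · exact le_csInf ⟨_, ⟨α, hα, rfl⟩⟩ (by rintro _ ⟨x, hx, rfl⟩; exact hαm hx)

lemma isMinOn_translate_iff (C : Matrix (Fin d) (Fin d) ℝ) (f : Fin d → ℝ)
    (c : ℝ) (α : Fin d → ℝ) :
    IsMinOn (fun β => Phi C β (fun i => f i + c)) (simplexS d) α ↔
      IsMinOn (fun β => Phi C β f) (simplexS d) α := by
  constructor <;> intro h x hx <;> have hh := h hx <;>
    simp only [Set.mem_setOf_eq, Phi_translate] at hh ⊢
  · exact le_of_mul_le_mul_left hh (Real.exp_pos _)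
  · exact mul_le_mul_of_nonneg_left hh (Real.exp_pos _).le

set_option maxHeartbeats 1000000 in
lemma gsoftmax_spec (C : Matrix (Fin d) (Fin d) ℝ) (f : Fin d → ℝ)
    (h : ∃ α ∈ simplexS d, IsMinOn (fun β => Phi C β f) (simplexS d) α) :
    gsoftmax C f ∈ simplexS d ∧
      IsMinOn (fun β => Phi C β f) (simplexS d) (gsoftmax C f) := by
  rw [gsoftmax, dif_pos h]
  exact h.choose_spec

end Aux

/-- Translation equivariance of the geometric log-sum-exp and softmax:
`Ω_C^*(f + c·1) = Ω_C^*(f) + c` and `g-softmax(f + c·1) = g-softmax(f)`. -/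
theorem gLSE_gsoftmax_translation (d : ℕ) (hd : 1 ≤ d)
    (C : Matrix (Fin d) (Fin d) ℝ) (hCsym : C.IsSymm) (hCdiag : ∀ i, C i i = 0)
    (hK : (kernelK C).PosDef) (f : Fin d → ℝ) (c : ℝ) :
    OmegaStar C (fun i => f i + c) = OmegaStar C f + c ∧
    gsoftmax C (fun i => f i + c) = gsoftmax C f := by
  obtain ⟨α, hα, hαm⟩ := exists_minOn C hd f
  have hαm' : IsMinOn (fun β => Phi C β (fun i => f i + c)) (simplexS d) α :=
    (isMinOn_translate_iff C f c α).mpr hαm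
  have hpos : 0 < Phi C α f := Phi_pos C hK f (mem_simplex_ne_zero hd hα)
  constructor
  · rw [OmegaStar, OmegaStar, sInf_image_eq C f hα hαm,
      sInf_image_eq C _ hα hαm', Phi_translate,
      Real.log_mul (Real.exp_ne_zero _) hpos.ne', Real.log_exp]
    ring
  · have h1 : ∃ α ∈ simplexS d,
        IsMinOn (fun β => Phi C β (fun i => f i + c)) (simplexS d) α := ⟨α, hα, hαm'⟩
    have h2 : ∃ α ∈ simplexS d,
        IsMinOn (fun β => Phi C β f) (simplexS d) α := ⟨α, hα, hαm⟩
    obtain ⟨hm1, hm1'⟩ := gsoftmax_spec C _ h1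
    obtain ⟨hm2, hm2'⟩ := gsoftmax_spec C f h2
    exact minOn_unique C hK f hm1 hm2 ((isMinOn_translate_iff C f c _).mp hm1') hm2'
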